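/- Let $H, H^+$ be symmetric positive definite matrices related by the BFGS update $H^+ = H - \rho(H\hat{y}s^\top + s\hat{y}^\top H) + \rho s s^\top + \rho^2 (\hat{y}^\top H \hat{y}) s s^\top$ with $\rho = (s^\top \hat{y})^{-1} > 0$. Suppose $\frac{\|s\|^2}{s^\top \hat{y}} \leq \frac{4}{\delta}$ and $\frac{\|\hat{y}\|^2}{s^\top \hat{y}} \leq \frac{4(\kappa+\delta)^2}{\delta}$ for constants $\kappa, \delta > 0$. Then $\|H^+\| \leq \left(1 + \frac{4(\kappa+\delta)}{\delta}\right)^2 \|H\| + \frac{4}{\delta}$. -/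

import Mathlib

open scoped RealInnerProductSpace

/-- The outer product `a bᵀ` of two vectors, as the linear map `x ↦ ⟪a, x⟫ • b`. -/
noncomputable def outer {d : ℕ} (a b : EuclideanSpace ℝ (Fin d)) :
    EuclideanSpace ℝ (Fin d) →L[ℝ] EuclideanSpace ℝ (Fin d) :=
  (innerSL ℝ a).smulRight b

lemma norm_outer_le {d : ℕ} (a b : EuclideanSpace ℝ (Fin d)) :
    ‖outer a b‖ ≤ ‖a‖ * ‖b‖ := by
  rw [outer, ContinuousLinearMap.norm_smulRight_apply, innerSL_apply_norm]

set_option maxHeartbeats 1000000 in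
/-- the key recursion bounding the growth of the inverse Hessian
approximation under the BFGS update. -/
theorem bfgs_inverse_update_norm_recursion (d : ℕ) (κ δ : ℝ) (hκ : 0 < κ) (hδ : 0 < δ)
    (H Hplus : EuclideanSpace ℝ (Fin d) →L[ℝ] EuclideanSpace ℝ (Fin d))
    (hHsym : ∀ x y : EuclideanSpace ℝ (Fin d), ⟪H x, y⟫ = ⟪x, H y⟫)
    (hHpos : ∀ x : EuclideanSpace ℝ (Fin d), x ≠ 0 → 0 < ⟪x, H x⟫)
    (hHpsym : ∀ x y : EuclideanSpace ℝ (Fin d), ⟪Hplus x, y⟫ = ⟪x, Hplus y⟫)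
    (hHppos : ∀ x : EuclideanSpace ℝ (Fin d), x ≠ 0 → 0 < ⟪x, Hplus x⟫)
    (s yhat : EuclideanSpace ℝ (Fin d)) (ρ : ℝ)
    (hsy : 0 < ⟪s, yhat⟫) (hρ : ρ = (⟪s, yhat⟫)⁻¹)
    (hupdate : Hplus = H - ρ • (outer s (H yhat) + outer (H yhat) s)
        + ρ • outer s s + (ρ ^ 2 * ⟪yhat, H yhat⟫) • outer s s)
    (hs : ‖s‖ ^ 2 / ⟪s, yhat⟫ ≤ 4 / δ)
    (hy : ‖yhat‖ ^ 2 / ⟪s, yhat⟫ ≤ 4 * (κ + δ) ^ 2 / δ) :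
    ‖Hplus‖ ≤ (1 + 4 * (κ + δ) / δ) ^ 2 * ‖H‖ + 4 / δ := by
  set σ : ℝ := ⟪s, yhat⟫ with hσdef
  have hy0 : yhat ≠ 0 := by
    rintro rfl
    simp [hσdef, inner_zero_right] at hsy
  have hρ0 : 0 < ρ := by rw [hρ]; exact inv_pos.mpr hsy
  have hρσ : ρ * σ = 1 := by rw [hρ]; field_simp
  have hq0 : 0 < ⟪yhat, H yhat⟫ := hHpos _ hy0
  have hHn : (0:ℝ) ≤ ‖H‖ := norm_nonneg _
  have hHy : ‖H yhat‖ ≤ ‖H‖ * ‖yhat‖ := H.le_opNorm _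
  have hq : ⟪yhat, H yhat⟫ ≤ ‖H‖ * ‖yhat‖ ^ 2 := by
    calc ⟪yhat, H yhat⟫ ≤ ‖yhat‖ * ‖H yhat‖ := real_inner_le_norm _ _
    _ ≤ ‖yhat‖ * (‖H‖ * ‖yhat‖) := by
        exact mul_le_mul_of_nonneg_left hHy (norm_nonneg _)
    _ = ‖H‖ * ‖yhat‖ ^ 2 := by ring
  have hs' : ‖s‖ ^ 2 ≤ 4 / δ * σ := (div_le_iff₀ hsy).mp hs
  have hy' : ‖yhat‖ ^ 2 ≤ 4 * (κ + δ) ^ 2 / δ * σ := (div_le_iff₀ hsy).mp hy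
  set c : ℝ := ρ * (‖s‖ * ‖yhat‖) with hcdef
  have hc0 : 0 ≤ c := by positivity
  set K : ℝ := 4 * (κ + δ) / δ with hKdef
  have hK0 : 0 < K := by positivity
  have hceq : c ^ 2 = (‖s‖ ^ 2 / σ) * (‖yhat‖ ^ 2 / σ) := by
    rw [hcdef, hρ]
    field_simp
  have hKsq : (4 / δ) * (4 * (κ + δ) ^ 2 / δ) = K ^ 2 := by
    rw [hKdef]
    field_simp
  have hc2 : c ^ 2 ≤ K ^ 2 := by
    rw [hceq, ← hKsq]
    exact mul_le_mul hs hy (by positivity) (by positivity)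
  have hcK : c ≤ K := by nlinarith [hc2, hc0, hK0]
  -- operator norm bound
  have hb1 : ‖(ρ : ℝ) • (outer s (H yhat) + outer (H yhat) s)‖ ≤ ρ * (2 * (‖s‖ * ‖H yhat‖)) := by
    calc ‖(ρ : ℝ) • (outer s (H yhat) + outer (H yhat) s)‖
        ≤ ‖ρ‖ * ‖outer s (H yhat) + outer (H yhat) s‖ := ContinuousLinearMap.opNorm_smul_le _ _
      _ ≤ ρ * (2 * (‖s‖ * ‖H yhat‖)) := by
          rw [Real.norm_eq_abs, abs_of_pos hρ0]
          refine mul_le_mul_of_nonneg_left ?_ hρ0.le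
          calc ‖outer s (H yhat) + outer (H yhat) s‖
              ≤ ‖outer s (H yhat)‖ + ‖outer (H yhat) s‖ := norm_add_le _ _
            _ ≤ ‖s‖ * ‖H yhat‖ + ‖H yhat‖ * ‖s‖ :=
                add_le_add (norm_outer_le _ _) (norm_outer_le _ _)
            _ = 2 * (‖s‖ * ‖H yhat‖) := by ring
  have hb2 : ‖(ρ : ℝ) • outer s s‖ ≤ ρ * ‖s‖ ^ 2 := by
    calc ‖(ρ : ℝ) • outer s s‖ ≤ ‖ρ‖ * ‖outer s s‖ := ContinuousLinearMap.opNorm_smul_le _ _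
      _ ≤ ρ * ‖s‖ ^ 2 := by
          rw [Real.norm_eq_abs, abs_of_pos hρ0]
          have := norm_outer_le s s
          nlinarith [hρ0]
  have hb3 : ‖(ρ ^ 2 * ⟪yhat, H yhat⟫) • outer s s‖ ≤ ρ ^ 2 * ⟪yhat, H yhat⟫ * ‖s‖ ^ 2 := by
    calc ‖(ρ ^ 2 * ⟪yhat, H yhat⟫) • outer s s‖
        ≤ ‖ρ ^ 2 * ⟪yhat, H yhat⟫‖ * ‖outer s s‖ := ContinuousLinearMap.opNorm_smul_le _ _
      _ ≤ ρ ^ 2 * ⟪yhat, H yhat⟫ * ‖s‖ ^ 2 := by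
          rw [Real.norm_eq_abs, abs_of_pos (by positivity)]
          have := norm_outer_le s s
          nlinarith [sq_nonneg ρ, hq0, mul_pos (pow_pos hρ0 2) hq0]
  have hnorm : ‖Hplus‖ ≤ ‖H‖ + ρ * (2 * (‖s‖ * ‖H yhat‖)) + ρ * ‖s‖ ^ 2
      + ρ ^ 2 * ⟪yhat, H yhat⟫ * ‖s‖ ^ 2 := by
    rw [hupdate]
    have t1 := norm_add_le (H - ρ • (outer s (H yhat) + outer (H yhat) s) + ρ • outer s s)
      ((ρ ^ 2 * ⟪yhat, H yhat⟫) • outer s s)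
    have t2 := norm_add_le (H - ρ • (outer s (H yhat) + outer (H yhat) s)) ((ρ : ℝ) • outer s s)
    have t3 := norm_sub_le H ((ρ : ℝ) • (outer s (H yhat) + outer (H yhat) s))
    linarith
  -- individual term bounds
  have ht1 : ρ * (2 * (‖s‖ * ‖H yhat‖)) ≤ 2 * ‖H‖ * c := by
    rw [hcdef]
    nlinarith [mul_le_mul_of_nonneg_left hHy (norm_nonneg s), hρ0.le, norm_nonneg s]
  have ht2 : ρ * ‖s‖ ^ 2 ≤ 4 / δ := by
    have := mul_le_mul_of_nonneg_left hs' hρ0.le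
    calc ρ * ‖s‖ ^ 2 ≤ ρ * (4 / δ * σ) := this
    _ = 4 / δ * (ρ * σ) := by ring
    _ = 4 / δ := by rw [hρσ]; ring
  have ht3 : ρ ^ 2 * ⟪yhat, H yhat⟫ * ‖s‖ ^ 2 ≤ ‖H‖ * c ^ 2 := by
    rw [hcdef]
    nlinarith [mul_le_mul_of_nonneg_left hq (mul_nonneg (sq_nonneg ρ) (sq_nonneg ‖s‖)),
      sq_nonneg ρ, sq_nonneg ‖s‖]
  have hfinal : ‖Hplus‖ ≤ ‖H‖ * (1 + c) ^ 2 + 4 / δ := by nlinarith [hnorm, ht1, ht2, ht3]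
  calc ‖Hplus‖ ≤ ‖H‖ * (1 + c) ^ 2 + 4 / δ := hfinal
    _ ≤ ‖H‖ * (1 + K) ^ 2 + 4 / δ := by nlinarith [mul_nonneg hHn (sub_nonneg.mpr hcK), hc0, hK0.le]
    _ = (1 + K) ^ 2 * ‖H‖ + 4 / δ := by ring
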